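/- Let ≺ be a linear order on the terminal vertices of the or-gadget. If x₁ ≺ x₁', then after deleting the arcs e₂ and e₃ the resulting digraph is acyclic and admits a topological ordering whose restriction to the terminals equals ≺. -/

import Mathlib

/-- The vertices of the or-gadget: six terminals and six non-terminals. -/
inductive OrV : Type
  | x1 | x1' | x2 | x2' | x3 | x3'
  | v1a | v1b | v2a | v2b | v3a | v3b
deriving DecidableEq

open OrV

/-- The arcs of the or-gadget. -/
def orEdges : List (OrV × OrV) :=
  [(x1, v1a), (v1b, x1'), (x2, v2a), (v2b, x2'), (x3, v3a), (v3b, x3'),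
   (v1a, v1b), (v2a, v2b), (v3a, v3b),
   (v1b, v2a), (v2b, v3a), (v3b, v1a),
   (v1b, v3a), (v2b, v1a), (v3b, v2a)]

def orE (a b : OrV) : Prop := (a, b) ∈ orEdges

def nonTerminal : Set OrV := {v1a, v1b, v2a, v2b, v3a, v3b}

def terminal : Set OrV := {x1, x1', x2, x2', x3, x3'}

def rho (r : OrV → ℕ) : OrV → ℕ
  | OrV.x1 => 12 * r x1 + 6
  | OrV.x1' => 12 * r x1' + 6
  | OrV.x2 => 12 * r x2 + 6
  | OrV.x2' => 12 * r x2' + 6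
  | OrV.x3 => 12 * r x3 + 6
  | OrV.x3' => 12 * r x3' + 6
  | OrV.v1a => 12 * r x1 + 7
  | OrV.v1b => 12 * r x1 + 8
  | OrV.v2a => 12 * (r x1 + r x1' + r x2 + r x2' + r x3 + r x3') + 100
  | OrV.v3a => 12 * (r x1 + r x1' + r x2 + r x2' + r x3 + r x3') + 101
  | OrV.v2b => 0
  | OrV.v3b => 1

/-- If a linear order on the terminals (given by an injective ranking `r`) has
`x1 ≺ x1'`, then deleting arcs `e₂, e₃` makes the or-gadget acyclic, with a topological
ordering whose restriction to the terminals is the given order. -/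
theorem orGadget_extend_ordering (r : OrV → ℕ) (hr : Set.InjOn r terminal)
    (h1 : r x1 < r x1') :
    (∀ v : OrV, ¬ Relation.TransGen
      (fun a b => orE a b ∧ (a, b) ≠ (v2a, v2b) ∧ (a, b) ≠ (v3a, v3b)) v v) ∧
    ∃ ρ : OrV → ℕ, Function.Injective ρ ∧
      (∀ a b, orE a b → (a, b) ≠ (v2a, v2b) → (a, b) ≠ (v3a, v3b) → ρ a < ρ b) ∧
      (∀ s ∈ terminal, ∀ t ∈ terminal, (ρ s < ρ t ↔ r s < r t)) := by
  have key : ∀ a b, orE a b → (a, b) ≠ (v2a, v2b) → (a, b) ≠ (v3a, v3b) →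
      rho r a < rho r b := by
    intro a b h h2 h3
    simp only [orE, orEdges, List.mem_cons, List.not_mem_nil, or_false,
      Prod.mk.injEq] at h
    rcases h with ⟨ha, hb⟩|⟨ha, hb⟩|⟨ha, hb⟩|⟨ha, hb⟩|⟨ha, hb⟩|⟨ha, hb⟩|⟨ha, hb⟩|⟨ha, hb⟩|⟨ha, hb⟩|⟨ha, hb⟩|⟨ha, hb⟩|⟨ha, hb⟩|⟨ha, hb⟩|⟨ha, hb⟩|⟨ha, hb⟩ <;>
      subst ha <;> subst hb <;>
      first
      | exact absurd rfl h2
      | exact absurd rfl h3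
      | (simp only [rho]; omega)
  have d : ∀ s t : OrV, s ∈ terminal → t ∈ terminal → s ≠ t → r s ≠ r t :=
    fun s t hs ht hne h => hne (hr hs ht h)
  have tm1 : x1 ∈ terminal := by simp [terminal]
  have tm1' : x1' ∈ terminal := by simp [terminal]
  have tm2 : x2 ∈ terminal := by simp [terminal]
  have tm2' : x2' ∈ terminal := by simp [terminal]
  have tm3 : x3 ∈ terminal := by simp [terminal]
  have tm3' : x3' ∈ terminal := by simp [terminal]
  have d1 := d x1 x1' tm1 tm1' (by decide)
  have d2 := d x1 x2 tm1 tm2 (by decide)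
  have d3 := d x1 x2' tm1 tm2' (by decide)
  have d4 := d x1 x3 tm1 tm3 (by decide)
  have d5 := d x1 x3' tm1 tm3' (by decide)
  have d6 := d x1' x2 tm1' tm2 (by decide)
  have d7 := d x1' x2' tm1' tm2' (by decide)
  have d8 := d x1' x3 tm1' tm3 (by decide)
  have d9 := d x1' x3' tm1' tm3' (by decide)
  have d10 := d x2 x2' tm2 tm2' (by decide)
  have d11 := d x2 x3 tm2 tm3 (by decide)
  have d12 := d x2 x3' tm2 tm3' (by decide)
  have d13 := d x2' x3 tm2' tm3 (by decide)
  have d14 := d x2' x3' tm2' tm3' (by decide)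
  have d15 := d x3 x3' tm3 tm3' (by decide)
  constructor
  · intro v hv
    have h2 : Relation.TransGen (fun a b : OrV => rho r a < rho r b) v v :=
      Relation.TransGen.mono (fun a b h => key a b h.1 h.2.1 h.2.2) _ _ hv
    have hlt : ∀ x y : OrV,
        Relation.TransGen (fun a b : OrV => rho r a < rho r b) x y →
        rho r x < rho r y := by
      intro x y hxy
      induction hxy with
      | single h => exact h
      | tail _ h ih => exact ih.trans h
    exact lt_irrefl _ (hlt v v h2)
  · refine ⟨rho r, ?_, key, ?_⟩
    · intro a b h
      cases a <;> cases b <;> simp only [rho] at h <;>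
        first
        | rfl
        | exact absurd h (by omega)
    · intro s hs t ht
      simp only [terminal, Set.mem_insert_iff, Set.mem_singleton_iff] at hs ht
      rcases hs with rfl|rfl|rfl|rfl|rfl|rfl <;> rcases ht with rfl|rfl|rfl|rfl|rfl|rfl <;>
        simp only [rho] <;> omega
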